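/- Let u: [0,Λ)^d → [0,1]^P be measurable with Σᵢuᵢ = 1 a.e., σ a symmetric matrix of surface tensions satisfying the triangle inequality, and define E_h(u) := h^{−1/2} ∫ u·σ(G_h∗u) dx. Then for every h>0 and every N∈ℕ one has the monotonicity E_{N²h}(u) ≤ E_h(u). -/

import Mathlib

open Real MeasureTheory Finset Pointwise

/-- The centered Gaussian kernel of variance `h` on `ℝ^d`. -/
noncomputable def gauss (d : ℕ) (h : ℝ) (z : EuclideanSpace ℝ (Fin d)) : ℝ :=
  (2 * π * h) ^ (-(d : ℝ) / 2) * Real.exp (-‖z‖ ^ 2 / (2 * h))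

/-- The fundamental cell `[0,Λ)^d` of the flat torus, as a subset of `ℝ^d`. -/
def box (d : ℕ) (Λ : ℝ) : Set (EuclideanSpace ℝ (Fin d)) :=
  {x | ∀ i, x i ∈ Set.Ico (0:ℝ) Λ}

/-- The thresholding energy
`E_h(u) = h^{-1/2} ∑_{i,j} σ_{ij} ∫_{[0,Λ)^d} u_i (G_h∗u_j) dx`. -/
noncomputable def Eh (d P : ℕ) (Λ : ℝ) (σ : Matrix (Fin P) (Fin P) ℝ) (h : ℝ)
    (u : EuclideanSpace ℝ (Fin d) → Fin P → ℝ) : ℝ :=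
  h ^ (-(1:ℝ) / 2) * ∑ i, ∑ j, σ i j *
    ∫ x in box d Λ, u x i * ∫ z, gauss d h z * u (x - z) j

namespace Stmt10Aux

/-! ### Basic properties of the Gaussian kernel -/

lemma gauss_nonneg {d : ℕ} {h : ℝ} (hh : 0 < h) (z : EuclideanSpace ℝ (Fin d)) :
    0 ≤ gauss d h z := by
  unfold gauss
  positivity

lemma gauss_measurable (d : ℕ) (h : ℝ) : Measurable (gauss d h) := by
  unfold gauss
  exact (continuous_const.mul (((continuous_norm.pow 2).neg.div_const _).rexp)).measurable

lemma gauss_integrable {d : ℕ} {h : ℝ} (hh : 0 < h) : Integrable (gauss d h) := by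
  have hb : (0:ℝ) < 1 / (2 * h) := by positivity
  have key : Integrable (fun v : EuclideanSpace ℝ (Fin d) =>
      Real.exp (-(1 / (2 * h)) * ‖v‖ ^ 2)) := by
    have h1 := (GaussianFourier.integrable_cexp_neg_mul_sq_norm_add
      (V := EuclideanSpace ℝ (Fin d)) (b := ((1 / (2 * h) : ℝ) : ℂ))
      (by simpa using hb) 0 0).norm
    refine h1.congr (Filter.Eventually.of_forall fun v => ?_)
    simp only [Complex.norm_exp]
    congr 1
    simp [← Complex.ofReal_pow]
  have : (fun z : EuclideanSpace ℝ (Fin d) =>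
      (2 * π * h) ^ (-(d : ℝ) / 2) * Real.exp (-(1 / (2 * h)) * ‖z‖ ^ 2)) = gauss d h := by
    funext z
    unfold gauss
    congr 1
    congr 1
    ring
  rw [← this]
  exact key.const_mul _

lemma gauss_scale {d : ℕ} {h c : ℝ} (hh : 0 < h) (hc : 0 < c) (w : EuclideanSpace ℝ (Fin d)) :
    gauss d (c ^ 2 * h) (c • w) = ((c : ℝ) ^ d)⁻¹ * gauss d h w := by
  unfold gauss
  rw [norm_smul, Real.norm_eq_abs, abs_of_pos hc]
  have e1 : 2 * π * (c ^ 2 * h) = c ^ 2 * (2 * π * h) := by ring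
  rw [e1, Real.mul_rpow (by positivity) (by positivity)]
  have e2 : ((c : ℝ) ^ 2) ^ (-(d : ℝ) / 2) = ((c : ℝ) ^ d)⁻¹ := by
    rw [← Real.rpow_natCast c 2, ← Real.rpow_mul hc.le]
    have : ((2 : ℕ) : ℝ) * (-(d : ℝ) / 2) = -(d : ℝ) := by push_cast; ring
    rw [this, Real.rpow_neg hc.le, Real.rpow_natCast]
  have e3 : -(c * ‖w‖) ^ 2 / (2 * (c ^ 2 * h)) = -‖w‖ ^ 2 / (2 * h) := by
    have hc2 : (c : ℝ) ^ 2 ≠ 0 := by positivity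
    field_simp
  rw [e2, e3]
  ring

/-! ### The box as a fundamental domain -/

lemma box_eq_preimage (d : ℕ) (Λ : ℝ) :
    box d Λ = ((MeasurableEquiv.toLp 2 (Fin d → ℝ)).symm) ⁻¹'
      (Set.univ.pi fun _ : Fin d => Set.Ico (0:ℝ) Λ) := by
  ext x
  rw [Set.mem_preimage, Set.mem_univ_pi]
  exact Iff.rfl

lemma box_measurableSet (d : ℕ) (Λ : ℝ) : MeasurableSet (box d Λ) := by
  rw [box_eq_preimage]
  exact ((MeasurableEquiv.toLp 2 (Fin d → ℝ)).symm).measurable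
    (MeasurableSet.univ_pi fun _ => measurableSet_Ico)

lemma volume_box_lt_top (d : ℕ) (Λ : ℝ) : volume (box d Λ) < ⊤ := by
  rw [box_eq_preimage]
  rw [(EuclideanSpace.volume_preserving_symm_measurableEquiv_toLp (Fin d)).measure_preimage
    ((MeasurableSet.univ_pi fun _ => measurableSet_Ico).nullMeasurableSet)]
  rw [volume_pi_pi]
  exact ENNReal.prod_lt_top fun i _ => by simp [Real.volume_Ico]

instance box_finite (d : ℕ) (Λ : ℝ) : IsFiniteMeasure (volume.restrict (box d Λ)) :=
  ⟨by rw [Measure.restrict_apply_univ]; exact volume_box_lt_top d Λ⟩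

lemma integrableOn_box {d : ℕ} {Λ : ℝ} {f : EuclideanSpace ℝ (Fin d) → ℝ}
    (hf : Measurable f) (hb : ∀ x, |f x| ≤ 1) : IntegrableOn f (box d Λ) := by
  refine (integrable_const (1:ℝ)).mono' hf.aestronglyMeasurable ?_
  exact Filter.Eventually.of_forall fun x => by simpa using hb x

/-- The scaled standard basis whose fundamental domain is `box d Λ`. -/
noncomputable def latticeBasis (d : ℕ) {Λ : ℝ} (hΛ : 0 < Λ) :
    Module.Basis (Fin d) ℝ (EuclideanSpace ℝ (Fin d)) :=
  (PiLp.basisFun 2 ℝ (Fin d)).unitsSMul (fun _ => Units.mk0 Λ hΛ.ne')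

lemma latticeBasis_repr (d : ℕ) {Λ : ℝ} (hΛ : 0 < Λ) (x : EuclideanSpace ℝ (Fin d)) (i : Fin d) :
    (latticeBasis d hΛ).repr x i = Λ⁻¹ * x i := by
  rw [latticeBasis, Module.Basis.repr_unitsSMul]
  simp [PiLp.basisFun_repr, Units.smul_def]

lemma latticeBasis_apply (d : ℕ) {Λ : ℝ} (hΛ : 0 < Λ) (i : Fin d) :
    latticeBasis d hΛ i = EuclideanSpace.single i Λ := by
  classical
  rw [latticeBasis, Module.Basis.unitsSMul_apply]
  ext j
  simp only [PiLp.basisFun_apply, Units.smul_def, Units.val_mk0]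
  rw [PiLp.smul_apply]
  rw [EuclideanSpace.single_apply]
  by_cases hji : j = i
  · subst hji; simp
  · simp [hji, Pi.single_apply]

lemma fd_eq_box (d : ℕ) {Λ : ℝ} (hΛ : 0 < Λ) :
    ZSpan.fundamentalDomain (latticeBasis d hΛ) = box d Λ := by
  ext x
  rw [ZSpan.mem_fundamentalDomain]
  show _ ↔ ∀ i, x i ∈ Set.Ico (0:ℝ) Λ
  refine forall_congr' fun i => ?_
  rw [Set.mem_Ico, Set.mem_Ico, latticeBasis_repr d hΛ x i, inv_mul_eq_div,
    div_lt_one hΛ, le_div_iff₀ hΛ, zero_mul]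

/-- Lattice periodicity from periodicity in each coordinate direction. -/
lemma periodic_lattice (d : ℕ) {Λ : ℝ} (hΛ : 0 < Λ) {F : EuclideanSpace ℝ (Fin d) → ℝ}
    (hFper : ∀ x i, F (x + EuclideanSpace.single i Λ) = F x) :
    ∀ v ∈ Submodule.span ℤ (Set.range ⇑(latticeBasis d hΛ)), ∀ x, F (v + x) = F x := by
  classical
  set S : AddSubgroup (EuclideanSpace ℝ (Fin d)) :=
    { carrier := {v | ∀ x, F (v + x) = F x}
      zero_mem' := by intro x; simp
      add_mem' := by
        intro a b ha hb x
        rw [add_assoc]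
        rw [ha (b + x), hb x]
      neg_mem' := by
        intro a ha x
        have := ha (-a + x)
        rw [← add_assoc, add_neg_cancel, zero_add] at this
        exact this.symm } with hS
  have key : ∀ v ∈ Submodule.span ℤ (Set.range ⇑(latticeBasis d hΛ)), v ∈ S := by
    intro v hv
    refine Submodule.span_induction ?_ ?_ ?_ ?_ hv
    · rintro _ ⟨i, rfl⟩
      intro x
      rw [latticeBasis_apply d hΛ, add_comm]
      exact hFper x i
    · exact S.zero_mem
    · intro a b _ _ ha hb; exact S.add_mem ha hb
    · intro n a _ ha
      exact S.zsmul_mem ha n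
  exact fun v hv x => key v hv x

/-- Integrals of periodic functions over the box are translation invariant. -/
lemma shift_box_integral (d : ℕ) {Λ : ℝ} (hΛ : 0 < Λ) {F : EuclideanSpace ℝ (Fin d) → ℝ}
    (hFper : ∀ x i, F (x + EuclideanSpace.single i Λ) = F x)
    (c : EuclideanSpace ℝ (Fin d)) :
    ∫ x in box d Λ, F (x + c) = ∫ x in box d Λ, F x := by
  classical
  set b := latticeBasis d hΛ with hb
  set G := (Submodule.span ℤ (Set.range ⇑b)).toAddSubgroup with hG
  haveI : Countable G :=
    inferInstanceAs (Countable (Submodule.span ℤ (Set.range ⇑b)))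
  have hfd : IsAddFundamentalDomain G (box d Λ) volume := by
    rw [← fd_eq_box d hΛ]
    exact ZSpan.isAddFundamentalDomain' b volume
  have hfd2 : IsAddFundamentalDomain G (c +ᵥ box d Λ) volume := hfd.vadd_of_comm c
  have hmeas2 : MeasurableSet (c +ᵥ box d Λ) := by
    have : (c +ᵥ box d Λ) = (fun y => -c + y) ⁻¹' box d Λ := by
      ext y
      rw [Set.mem_vadd_set_iff_neg_vadd_mem]
      rfl
    rw [this]
    exact (measurable_const_add (-c)) (box_measurableSet d Λ)
  have hper' : ∀ (g : G) (x), F (g +ᵥ x) = F x := by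
    intro g x
    exact periodic_lattice d hΛ hFper g.1 g.2 x
  have step1 : ∫ x in box d Λ, F (x + c) = ∫ y in c +ᵥ box d Λ, F y := by
    rw [← integral_indicator (box_measurableSet d Λ), ← integral_indicator hmeas2]
    have : (fun x => (box d Λ).indicator (fun x => F (x + c)) x)
        = fun x => (c +ᵥ box d Λ).indicator F (x + c) := by
      funext x
      by_cases hx : x ∈ box d Λ
      · have hx2 : x + c ∈ c +ᵥ box d Λ := by
          rw [Set.mem_vadd_set_iff_neg_vadd_mem]
          have : -c +ᵥ (x + c) = x := by
            simp [vadd_eq_add]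
          rw [this]; exact hx
        rw [Set.indicator_of_mem hx, Set.indicator_of_mem hx2]
      · have hx2 : x + c ∉ c +ᵥ box d Λ := by
          rw [Set.mem_vadd_set_iff_neg_vadd_mem]
          have : -c +ᵥ (x + c) = x := by
            simp [vadd_eq_add]
          rw [this]; exact hx
        rw [Set.indicator_of_notMem hx, Set.indicator_of_notMem hx2]
    rw [this]
    exact integral_add_right_eq_self (fun y => (c +ᵥ box d Λ).indicator F y) c
  rw [step1]
  exact hfd2.setIntegral_eq hfd hper'

/-! ### The combinatorial chain inequality -/

lemma chain_ineq {P : ℕ} (σ : Matrix (Fin P) (Fin P) ℝ)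
    (htri : ∀ i j k, σ i j ≤ σ i k + σ k j)
    (v : ℕ → Fin P → ℝ) (hv0 : ∀ l i, 0 ≤ v l i) (hv1 : ∀ l, ∑ i, v l i = 1) :
    ∀ N : ℕ, 0 < N →
      ∑ i, ∑ j, σ i j * (v 0 i * v N j) ≤
        ∑ l ∈ range N, ∑ a, ∑ b, σ a b * (v l a * v (l + 1) b) := by
  intro N
  induction N with
  | zero => intro hN; exact absurd hN (lt_irrefl 0)
  | succ N ih =>
    intro _
    rcases Nat.eq_zero_or_pos N with hN0 | hNpos
    · subst hN0
      simp
    calc ∑ i, ∑ j, σ i j * (v 0 i * v (N + 1) j)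
        = ∑ i, ∑ j, ∑ k, σ i j * (v 0 i * v (N + 1) j) * v N k := by
          refine Finset.sum_congr rfl fun i _ => Finset.sum_congr rfl fun j _ => ?_
          rw [← Finset.mul_sum, hv1 N, mul_one]
      _ ≤ ∑ i, ∑ j, ∑ k, (σ i k + σ k j) * (v 0 i * v (N + 1) j * v N k) := by
          refine Finset.sum_le_sum fun i _ => Finset.sum_le_sum fun j _ =>
            Finset.sum_le_sum fun k _ => ?_
          have hnn : 0 ≤ v 0 i * v (N + 1) j * v N k := by
            have := hv0 0 i; have := hv0 (N+1) j; have := hv0 N k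
            positivity
          calc σ i j * (v 0 i * v (N + 1) j) * v N k
              = σ i j * (v 0 i * v (N + 1) j * v N k) := by ring
            _ ≤ (σ i k + σ k j) * (v 0 i * v (N + 1) j * v N k) :=
                mul_le_mul_of_nonneg_right (htri i j k) hnn
      _ = (∑ i, ∑ k, σ i k * (v 0 i * v N k))
            + ∑ a, ∑ b, σ a b * (v N a * v (N + 1) b) := by
          have expand : ∀ i j k : Fin P,
              (σ i k + σ k j) * (v 0 i * v (N + 1) j * v N k)
                = v (N + 1) j * (σ i k * (v 0 i * v N k))
                  + v 0 i * (σ k j * (v N k * v (N + 1) j)) := by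
            intro i j k; ring
          simp only [expand, Finset.sum_add_distrib]
          congr 1
          · refine Finset.sum_congr rfl fun i _ => ?_
            calc ∑ j, ∑ k, v (N+1) j * (σ i k * (v 0 i * v N k))
                = ∑ j, v (N+1) j * ∑ k, σ i k * (v 0 i * v N k) := by
                  refine Finset.sum_congr rfl fun j _ => ?_
                  rw [Finset.mul_sum]
              _ = (∑ j, v (N+1) j) * ∑ k, σ i k * (v 0 i * v N k) := by
                  rw [← Finset.sum_mul]
              _ = ∑ k, σ i k * (v 0 i * v N k) := by rw [hv1 (N+1), one_mul]
          · calc ∑ i, ∑ j, ∑ k, v 0 i * (σ k j * (v N k * v (N + 1) j))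
                = ∑ i, v 0 i * ∑ j, ∑ k, σ k j * (v N k * v (N + 1) j) := by
                  refine Finset.sum_congr rfl fun i _ => ?_
                  rw [Finset.mul_sum]
                  refine Finset.sum_congr rfl fun j _ => ?_
                  rw [Finset.mul_sum]
              _ = (∑ i, v 0 i) * ∑ j, ∑ k, σ k j * (v N k * v (N + 1) j) := by
                  rw [← Finset.sum_mul]
              _ = ∑ j, ∑ k, σ k j * (v N k * v (N + 1) j) := by rw [hv1 0, one_mul]
              _ = ∑ a, ∑ b, σ a b * (v N a * v (N + 1) b) := by rw [Finset.sum_comm]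
      _ ≤ (∑ l ∈ range N, ∑ a, ∑ b, σ a b * (v l a * v (l + 1) b))
            + ∑ a, ∑ b, σ a b * (v N a * v (N + 1) b) := by
          exact add_le_add_left (ih hNpos) _
      _ = ∑ l ∈ range (N + 1), ∑ a, ∑ b, σ a b * (v l a * v (l + 1) b) := by
          rw [Finset.sum_range_succ]


/-! ### Analytic lemmas -/

section Main

variable {d P : ℕ} {Λ : ℝ} {u : EuclideanSpace ℝ (Fin d) → Fin P → ℝ} {h : ℝ}

lemma uabs (hrange : ∀ x i, u x i ∈ Set.Icc (0:ℝ) 1) (x : EuclideanSpace ℝ (Fin d)) (a : Fin P) :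
    |u x a| ≤ 1 := by
  have := hrange x a
  rw [abs_of_nonneg this.1]
  exact this.2

lemma corr_measurable (hum : Measurable u) (Λ : ℝ) (c : ℝ) (a b : Fin P) :
    Measurable fun w : EuclideanSpace ℝ (Fin d) =>
      ∫ x in box d Λ, u x a * u (x - c • w) b := by
  have hm : StronglyMeasurable (Function.uncurry fun (w x : EuclideanSpace ℝ (Fin d)) =>
      u x a * u (x - c • w) b) := by
    apply Measurable.stronglyMeasurable
    exact (((measurable_pi_apply a).comp hum).comp measurable_snd).mul
      (((measurable_pi_apply b).comp hum).comp (measurable_snd.sub (measurable_fst.const_smul c)))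
  exact hm.integral_prod_right.measurable

lemma corr_abs_le (hrange : ∀ x i, u x i ∈ Set.Icc (0:ℝ) 1) {Λ : ℝ} (c : ℝ) (a b : Fin P)
    (w : EuclideanSpace ℝ (Fin d)) :
    |∫ x in box d Λ, u x a * u (x - c • w) b| ≤ (volume (box d Λ)).toReal := by
  have key := norm_integral_le_of_norm_le_const (μ := volume.restrict (box d Λ))
    (f := fun x => u x a * u (x - c • w) b) (C := 1)
    (Filter.Eventually.of_forall fun x => by
      rw [Real.norm_eq_abs, abs_mul]
      exact mul_le_one₀ (uabs hrange x a) (abs_nonneg _) (uabs hrange _ b))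
  rw [measureReal_restrict_apply_univ, one_mul] at key
  exact key

lemma prod_integrable (hum : Measurable u) (hrange : ∀ x i, u x i ∈ Set.Icc (0:ℝ) 1)
    (hh : 0 < h) (Λ : ℝ) (c : ℝ) (a b : Fin P) :
    Integrable (fun p : EuclideanSpace ℝ (Fin d) × EuclideanSpace ℝ (Fin d) =>
      u p.1 a * (gauss d h p.2 * u (p.1 - c • p.2) b))
      ((volume.restrict (box d Λ)).prod volume) := by
  have dom : Integrable (fun p : EuclideanSpace ℝ (Fin d) × EuclideanSpace ℝ (Fin d) =>
      (1:ℝ) * gauss d h p.2) ((volume.restrict (box d Λ)).prod volume) :=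
    (integrable_const (1:ℝ)).mul_prod (gauss_integrable hh)
  refine dom.mono' ?_ (Filter.Eventually.of_forall fun p => ?_)
  · exact ((((measurable_pi_apply a).comp hum).comp measurable_fst).mul
      (((gauss_measurable d h).comp measurable_snd).mul
        (((measurable_pi_apply b).comp hum).comp
          (measurable_fst.sub (measurable_snd.const_smul c))))).aestronglyMeasurable
  · rw [Real.norm_eq_abs, abs_mul, abs_mul, abs_of_nonneg (gauss_nonneg hh p.2)]
    calc |u p.1 a| * (gauss d h p.2 * |u (p.1 - c • p.2) b|)
        ≤ 1 * (gauss d h p.2 * 1) := by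
          refine mul_le_mul (uabs hrange _ a) ?_
            (mul_nonneg (gauss_nonneg hh p.2) (abs_nonneg _)) one_pos.le
          exact mul_le_mul_of_nonneg_left (uabs hrange _ b) (gauss_nonneg hh p.2)
      _ = 1 * gauss d h p.2 := by ring

lemma repr_lemma (hum : Measurable u) (hrange : ∀ x i, u x i ∈ Set.Icc (0:ℝ) 1)
    (hh : 0 < h) (Λ : ℝ) {c : ℝ} (hc : 0 < c) (a b : Fin P) :
    (∫ x in box d Λ, u x a * ∫ z, gauss d (c ^ 2 * h) z * u (x - z) b)
      = ∫ w, gauss d h w * ∫ x in box d Λ, u x a * u (x - c • w) b := by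
  have hcd : (0:ℝ) < c ^ d := pow_pos hc d
  have scale : ∀ x : EuclideanSpace ℝ (Fin d),
      (∫ z, gauss d (c^2*h) z * u (x - z) b) = ∫ w, gauss d h w * u (x - c • w) b := by
    intro x
    have h2 := MeasureTheory.Measure.integral_comp_smul_of_nonneg (volume)
      (fun z => gauss d (c^2*h) z * u (x - z) b) c (hR := hc.le)
    rw [finrank_euclideanSpace_fin] at h2
    have h3 : ∀ w : EuclideanSpace ℝ (Fin d), gauss d (c^2*h) (c • w) * u (x - c • w) b
        = (c^d)⁻¹ * (gauss d h w * u (x - c • w) b) := fun w => by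
      rw [gauss_scale hh hc]; ring
    calc (∫ z, gauss d (c^2*h) z * u (x - z) b)
        = (c^d) * ((c^d)⁻¹ • ∫ z, gauss d (c^2*h) z * u (x - z) b) := by
          rw [smul_eq_mul, ← mul_assoc, mul_inv_cancel₀ hcd.ne', one_mul]
      _ = (c^d) * ∫ w, gauss d (c^2*h) (c • w) * u (x - c • w) b := by rw [← h2]
      _ = (c^d) * ∫ w, (c^d)⁻¹ * (gauss d h w * u (x - c • w) b) := by simp_rw [h3]
      _ = (c^d) * ((c^d)⁻¹ * ∫ w, gauss d h w * u (x - c • w) b) := by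
          rw [integral_const_mul]
      _ = ∫ w, gauss d h w * u (x - c • w) b := by
          rw [← mul_assoc, mul_inv_cancel₀ hcd.ne', one_mul]
  calc ∫ x in box d Λ, u x a * ∫ z, gauss d (c^2*h) z * u (x - z) b
      = ∫ x in box d Λ, ∫ w, u x a * (gauss d h w * u (x - c • w) b) := by
        refine integral_congr_ae (Filter.Eventually.of_forall fun x => ?_)
        dsimp only
        rw [scale x]
        exact (integral_const_mul _ _).symm
    _ = ∫ w, ∫ x in box d Λ, u x a * (gauss d h w * u (x - c • w) b) := by
        exact integral_integral_swap (prod_integrable hum hrange hh Λ c a b)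
    _ = ∫ w, gauss d h w * ∫ x in box d Λ, u x a * u (x - c • w) b := by
        refine integral_congr_ae (Filter.Eventually.of_forall fun w => ?_)
        dsimp only
        rw [← integral_const_mul]
        refine integral_congr_ae (Filter.Eventually.of_forall fun x => ?_)
        ring

lemma shifted_corr (hΛ : 0 < Λ)
    (hper : ∀ (x : EuclideanSpace ℝ (Fin d)) (i : Fin d),
      u (x + EuclideanSpace.single i Λ) = u x)
    (w : EuclideanSpace ℝ (Fin d)) (l : ℕ) (a b : Fin P) :
    ∫ x in box d Λ, u (x - (l:ℝ) • w) a * u (x - ((l:ℝ)+1) • w) b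
      = ∫ x in box d Λ, u x a * u (x - w) b := by
  have hFper : ∀ (y : EuclideanSpace ℝ (Fin d)) (i : Fin d),
      u (y + EuclideanSpace.single i Λ) a * u ((y + EuclideanSpace.single i Λ) - w) b
        = u y a * u (y - w) b := by
    intro y i
    rw [add_sub_right_comm, hper y i, hper (y - w) i]
  have key := shift_box_integral d hΛ (F := fun y => u y a * u (y - w) b) hFper
    (-((l:ℝ) • w))
  rw [← key]
  refine integral_congr_ae (Filter.Eventually.of_forall fun x => ?_)
  dsimp only
  have e1 : x + -((l:ℝ) • w) = x - (l:ℝ) • w := by rw [← sub_eq_add_neg]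
  have e2 : x - (l:ℝ) • w - w = x - ((l:ℝ)+1) • w := by
    rw [add_smul, one_smul, sub_sub]
  rw [e1, e2]

lemma w_ineq (hΛ : 0 < Λ) (σ : Matrix (Fin P) (Fin P) ℝ)
    (htri : ∀ i j k, σ i j ≤ σ i k + σ k j)
    (hum : Measurable u)
    (hrange : ∀ x i, u x i ∈ Set.Icc (0:ℝ) 1)
    (hsum : ∀ x, ∑ i, u x i = 1)
    (hper : ∀ (x : EuclideanSpace ℝ (Fin d)) (i : Fin d),
      u (x + EuclideanSpace.single i Λ) = u x)
    (w : EuclideanSpace ℝ (Fin d)) (N : ℕ) (hN : 0 < N) :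
    ∑ i, ∑ j, σ i j * ∫ x in box d Λ, u x i * u (x - (N:ℝ) • w) j
      ≤ (N:ℝ) * ∑ a, ∑ b, σ a b * ∫ x in box d Λ, u x a * u (x - w) b := by
  have I1 : ∀ (c2 : ℝ) (a b : Fin P),
      IntegrableOn (fun x => u x a * u (x - c2 • w) b) (box d Λ) volume := by
    intro c2 a b
    refine integrableOn_box ?_ ?_
    · exact (((measurable_pi_apply a).comp hum)).mul
        (((measurable_pi_apply b).comp hum).comp (measurable_id.sub_const _))
    · intro x
      rw [abs_mul]
      exact mul_le_one₀ (uabs hrange x a) (abs_nonneg _) (uabs hrange _ b)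
  have I2 : ∀ (l : ℕ) (a b : Fin P),
      IntegrableOn (fun x => u (x - (l:ℝ) • w) a * u (x - ((l:ℝ)+1) • w) b)
        (box d Λ) volume := by
    intro l a b
    refine integrableOn_box ?_ ?_
    · exact ((((measurable_pi_apply a).comp hum)).comp (measurable_id.sub_const _)).mul
        (((measurable_pi_apply b).comp hum).comp (measurable_id.sub_const _))
    · intro x
      rw [abs_mul]
      exact mul_le_one₀ (uabs hrange _ a) (abs_nonneg _) (uabs hrange _ b)
  have chainpt : ∀ x : EuclideanSpace ℝ (Fin d),
      ∑ i, ∑ j, σ i j * (u x i * u (x - (N:ℝ) • w) j)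
        ≤ ∑ l ∈ range N, ∑ a, ∑ b,
            σ a b * (u (x - (l:ℝ) • w) a * u (x - ((l:ℝ)+1) • w) b) := by
    intro x
    have key := chain_ineq σ htri (fun l i => u (x - (l:ℝ) • w) i)
      (fun l i => (hrange _ i).1) (fun l => hsum _) N hN
    have e0 : x - ((0:ℕ):ℝ) • w = x := by simp
    rw [e0] at key
    refine le_trans key (le_of_eq ?_)
    refine Finset.sum_congr rfl fun l _ => ?_
    refine Finset.sum_congr rfl fun a _ => ?_
    refine Finset.sum_congr rfl fun b _ => ?_
    push_cast
    ring_nf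
  have L1 : ∑ i, ∑ j, σ i j * ∫ x in box d Λ, u x i * u (x - (N:ℝ) • w) j
      = ∫ x in box d Λ, ∑ i, ∑ j, σ i j * (u x i * u (x - (N:ℝ) • w) j) := by
    rw [integral_finset_sum _ (fun i _ => integrable_finset_sum _
      (fun j _ => ((I1 (N:ℝ) i j).const_mul (σ i j))))]
    refine Finset.sum_congr rfl fun i _ => ?_
    rw [integral_finset_sum _ (fun j _ => ((I1 (N:ℝ) i j).const_mul (σ i j)))]
    exact Finset.sum_congr rfl fun j _ => (integral_const_mul _ _).symm
  have R1 : ∑ l ∈ range N, ∑ a, ∑ b, σ a b *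
        ∫ x in box d Λ, u (x - (l:ℝ) • w) a * u (x - ((l:ℝ)+1) • w) b
      = ∫ x in box d Λ, ∑ l ∈ range N, ∑ a, ∑ b,
          σ a b * (u (x - (l:ℝ) • w) a * u (x - ((l:ℝ)+1) • w) b) := by
    rw [integral_finset_sum _ (fun l _ => integrable_finset_sum _
      (fun a _ => integrable_finset_sum _ (fun b _ => ((I2 l a b).const_mul (σ a b)))))]
    refine Finset.sum_congr rfl fun l _ => ?_
    rw [integral_finset_sum _ (fun a _ => integrable_finset_sum _
      (fun b _ => ((I2 l a b).const_mul (σ a b))))]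
    refine Finset.sum_congr rfl fun a _ => ?_
    rw [integral_finset_sum _ (fun b _ => ((I2 l a b).const_mul (σ a b)))]
    exact Finset.sum_congr rfl fun b _ => (integral_const_mul _ _).symm
  calc ∑ i, ∑ j, σ i j * ∫ x in box d Λ, u x i * u (x - (N:ℝ) • w) j
      = ∫ x in box d Λ, ∑ i, ∑ j, σ i j * (u x i * u (x - (N:ℝ) • w) j) := L1
    _ ≤ ∫ x in box d Λ, ∑ l ∈ range N, ∑ a, ∑ b,
          σ a b * (u (x - (l:ℝ) • w) a * u (x - ((l:ℝ)+1) • w) b) := by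
        refine integral_mono ?_ ?_ chainpt
        · exact integrable_finset_sum _ (fun i _ => integrable_finset_sum _
            (fun j _ => ((I1 (N:ℝ) i j).const_mul (σ i j))))
        · exact integrable_finset_sum _ (fun l _ => integrable_finset_sum _
            (fun a _ => integrable_finset_sum _ (fun b _ => ((I2 l a b).const_mul (σ a b)))))
    _ = ∑ l ∈ range N, ∑ a, ∑ b, σ a b *
          ∫ x in box d Λ, u (x - (l:ℝ) • w) a * u (x - ((l:ℝ)+1) • w) b := R1.symm
    _ = ∑ l ∈ range N, ∑ a, ∑ b, σ a b * ∫ x in box d Λ, u x a * u (x - w) b := by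
        refine Finset.sum_congr rfl fun l _ => ?_
        refine Finset.sum_congr rfl fun a _ => ?_
        refine Finset.sum_congr rfl fun b _ => ?_
        rw [shifted_corr hΛ hper w l a b]
    _ = (N:ℝ) * ∑ a, ∑ b, σ a b * ∫ x in box d Λ, u x a * u (x - w) b := by
        rw [Finset.sum_const, Finset.card_range, nsmul_eq_mul]


lemma gw_integrable (hum : Measurable u) (hrange : ∀ x i, u x i ∈ Set.Icc (0:ℝ) 1)
    (hh : 0 < h) (Λ : ℝ) (c : ℝ) (a b : Fin P) :
    Integrable (fun w : EuclideanSpace ℝ (Fin d) =>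
      gauss d h w * ∫ x in box d Λ, u x a * u (x - c • w) b) volume := by
  refine ((gauss_integrable hh).const_mul ((volume (box d Λ)).toReal)).mono'
    ?_ (Filter.Eventually.of_forall fun w => ?_)
  · exact ((gauss_measurable d h).mul (corr_measurable hum Λ c a b)).aestronglyMeasurable
  · rw [Real.norm_eq_abs, abs_mul, abs_of_nonneg (gauss_nonneg hh w)]
    calc gauss d h w * |∫ x in box d Λ, u x a * u (x - c • w) b|
        ≤ gauss d h w * (volume (box d Λ)).toReal :=
          mul_le_mul_of_nonneg_left (corr_abs_le hrange c a b w) (gauss_nonneg hh w)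
      _ = (volume (box d Λ)).toReal * gauss d h w := mul_comm _ _

end Main

end Stmt10Aux

open Stmt10Aux

/-- Monotonicity of the thresholding energies: for `u : [0,Λ)^d → [0,1]^P`
with `∑ᵢ uᵢ = 1`, a symmetric surface tension matrix `σ` with zero diagonal, positive
off-diagonal entries and satisfying the triangle inequality, one has
`E_{N²h}(u) ≤ E_h(u)` for every `h > 0` and every `N ∈ ℕ`, `N ≥ 1`. -/
theorem stmt10 (d P : ℕ) (Λ : ℝ) (hΛ : 0 < Λ)
    (σ : Matrix (Fin P) (Fin P) ℝ)
    (hsymm : ∀ i j, σ i j = σ j i)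
    (hdiag : ∀ i, σ i i = 0)
    (hpos : ∀ i j, i ≠ j → 0 < σ i j)
    (htri : ∀ i j k, σ i j ≤ σ i k + σ k j)
    (u : EuclideanSpace ℝ (Fin d) → Fin P → ℝ)
    (hum : Measurable u)
    (hrange : ∀ x i, u x i ∈ Set.Icc (0:ℝ) 1)
    (hsum : ∀ x, ∑ i, u x i = 1)
    (hper : ∀ (x : EuclideanSpace ℝ (Fin d)) (i : Fin d),
      u (x + EuclideanSpace.single i Λ) = u x)
    (h : ℝ) (hh : 0 < h) (N : ℕ) (hN : 0 < N) :
    Eh d P Λ σ ((N : ℝ) ^ 2 * h) u ≤ Eh d P Λ σ h u := by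
  classical
  have hNR : (0:ℝ) < (N:ℝ) := by exact_mod_cast hN
  have J : ∀ (c : ℝ) (a b : Fin P), Integrable
      (fun w => gauss d h w * ∫ x in box d Λ, u x a * u (x - c • w) b) volume :=
    fun c a b => gw_integrable hum hrange hh Λ c a b
  have J1 : ∀ (a b : Fin P), Integrable
      (fun w => gauss d h w * ∫ x in box d Λ, u x a * u (x - w) b) volume := by
    intro a b
    have := J 1 a b
    simpa [one_smul] using this
  have hrepr1 : ∀ a b : Fin P,
      (∫ x in box d Λ, u x a * ∫ z, gauss d h z * u (x - z) b)
        = ∫ w, gauss d h w * ∫ x in box d Λ, u x a * u (x - w) b := by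
    intro a b
    have := repr_lemma hum hrange hh Λ one_pos a b
    simpa [one_smul] using this
  have eTN : (∑ i, ∑ j, σ i j *
        ∫ x in box d Λ, u x i * ∫ z, gauss d ((N:ℝ)^2*h) z * u (x - z) j)
      = ∫ w, ∑ i, ∑ j, σ i j *
          (gauss d h w * ∫ x in box d Λ, u x i * u (x - (N:ℝ) • w) j) := by
    rw [integral_finset_sum _ (fun i _ => integrable_finset_sum _
      (fun j _ => (J (N:ℝ) i j).const_mul (σ i j)))]
    refine Finset.sum_congr rfl fun i _ => ?_
    rw [integral_finset_sum _ (fun j _ => (J (N:ℝ) i j).const_mul (σ i j))]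
    refine Finset.sum_congr rfl fun j _ => ?_
    rw [integral_const_mul, repr_lemma hum hrange hh Λ hNR i j]
  have eT1 : (∑ i, ∑ j, σ i j *
        ∫ x in box d Λ, u x i * ∫ z, gauss d h z * u (x - z) j)
      = ∫ w, ∑ i, ∑ j, σ i j *
          (gauss d h w * ∫ x in box d Λ, u x i * u (x - w) j) := by
    rw [integral_finset_sum _ (fun i _ => integrable_finset_sum _
      (fun j _ => (J1 i j).const_mul (σ i j)))]
    refine Finset.sum_congr rfl fun i _ => ?_
    rw [integral_finset_sum _ (fun j _ => (J1 i j).const_mul (σ i j))]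
    refine Finset.sum_congr rfl fun j _ => ?_
    rw [integral_const_mul, hrepr1 i j]
  have key : (∑ i, ∑ j, σ i j *
        ∫ x in box d Λ, u x i * ∫ z, gauss d ((N:ℝ)^2*h) z * u (x - z) j)
      ≤ (N:ℝ) * ∑ i, ∑ j, σ i j *
          ∫ x in box d Λ, u x i * ∫ z, gauss d h z * u (x - z) j := by
    rw [eTN, eT1, ← integral_const_mul]
    refine integral_mono ?_ ?_ ?_
    · exact integrable_finset_sum _ (fun i _ => integrable_finset_sum _
        (fun j _ => (J (N:ℝ) i j).const_mul (σ i j)))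
    · exact (integrable_finset_sum _ (fun i _ => integrable_finset_sum _
        (fun j _ => (J1 i j).const_mul (σ i j)))).const_mul (N:ℝ)
    · intro w
      dsimp only
      have base := w_ineq hΛ σ htri hum hrange hsum hper w N hN
      have hg := gauss_nonneg hh w
      calc ∑ i, ∑ j, σ i j * (gauss d h w * ∫ x in box d Λ, u x i * u (x - (N:ℝ) • w) j)
          = gauss d h w * ∑ i, ∑ j, σ i j *
              ∫ x in box d Λ, u x i * u (x - (N:ℝ) • w) j := by
            simp only [Finset.mul_sum]
            exact Finset.sum_congr rfl fun i _ => Finset.sum_congr rfl fun j _ => by ring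
        _ ≤ gauss d h w * ((N:ℝ) * ∑ a, ∑ b, σ a b *
              ∫ x in box d Λ, u x a * u (x - w) b) :=
            mul_le_mul_of_nonneg_left base hg
        _ = (N:ℝ) * ∑ i, ∑ j, σ i j *
              (gauss d h w * ∫ x in box d Λ, u x i * u (x - w) j) := by
            simp only [Finset.mul_sum]
            exact Finset.sum_congr rfl fun i _ => Finset.sum_congr rfl fun j _ => by ring
  unfold Eh
  have efac : ((N:ℝ)^2*h) ^ (-(1:ℝ)/2) = (N:ℝ)⁻¹ * h ^ (-(1:ℝ)/2) := by
    rw [Real.mul_rpow (by positivity) hh.le]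
    congr 1
    rw [← Real.rpow_natCast (N:ℝ) 2, ← Real.rpow_mul (Nat.cast_nonneg N)]
    norm_num
    exact Real.rpow_neg_one _
  rw [efac]
  calc (N:ℝ)⁻¹ * h ^ (-(1:ℝ)/2) * (∑ i, ∑ j, σ i j *
          ∫ x in box d Λ, u x i * ∫ z, gauss d ((N:ℝ)^2*h) z * u (x - z) j)
      ≤ (N:ℝ)⁻¹ * h ^ (-(1:ℝ)/2) * ((N:ℝ) * ∑ i, ∑ j, σ i j *
          ∫ x in box d Λ, u x i * ∫ z, gauss d h z * u (x - z) j) :=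
        mul_le_mul_of_nonneg_left key (by positivity)
    _ = h ^ (-(1:ℝ)/2) * ∑ i, ∑ j, σ i j *
          ∫ x in box d Λ, u x i * ∫ z, gauss d h z * u (x - z) j := by
        rw [show ((N:ℝ)⁻¹ * h ^ (-(1:ℝ)/2) * ((N:ℝ) * ∑ i, ∑ j, σ i j *
            ∫ x in box d Λ, u x i * ∫ z, gauss d h z * u (x - z) j))
          = ((N:ℝ)⁻¹ * (N:ℝ)) * (h ^ (-(1:ℝ)/2) * ∑ i, ∑ j, σ i j *
            ∫ x in box d Λ, u x i * ∫ z, gauss d h z * u (x - z) j) from by ring,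
          inv_mul_cancel₀ hNR.ne', one_mul]
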